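/- The null space of Gᵀ is exactly the column space of X: the kernel of the linear map v ↦ Gᵀ · v from ℝ^(p+q) to ℝ^p equals the range of the linear map w ↦ X · w from ℝ^q to ℝ^(p+q). -/

import Mathlib

open Matrix

/-- The null space of Gᵀ is exactly the column space of X: the kernel of the linear map
v ↦ Gᵀ · v from ℝ^(p+q) to ℝ^p equals the range of the linear map w ↦ X · w
from ℝ^q to ℝ^(p+q). -/
theorem stmt_4 {p q : ℕ}
    (M₁₁ : Matrix (Fin p) (Fin p) ℝ) (M₁₂ : Matrix (Fin p) (Fin q) ℝ)
    (M₂₂ : Matrix (Fin q) (Fin q) ℝ)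
    (M : Matrix (Fin p ⊕ Fin q) (Fin p ⊕ Fin q) ℝ)
    (hM : M = Matrix.fromBlocks M₁₁ M₁₂ M₁₂ᵀ M₂₂)
    (hMinv : IsUnit M) (hM₂₂inv : IsUnit M₂₂)
    (N : Matrix (Fin p) (Fin q) ℝ) (hN : N = M₁₂ * M₂₂⁻¹)
    (X : Matrix (Fin p ⊕ Fin q) (Fin q) ℝ) (hX : X = Matrix.fromRows N 1)
    (GT : Matrix (Fin p) (Fin p ⊕ Fin q) ℝ)
    (hGT : GT = Matrix.fromCols (1 : Matrix (Fin p) (Fin p) ℝ) (0 : Matrix (Fin p) (Fin q) ℝ) * M⁻¹) :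
    LinearMap.ker GT.mulVecLin = LinearMap.range X.mulVecLin := by
  have hMdet : IsUnit M.det := (Matrix.isUnit_iff_isUnit_det M).mp hMinv
  have hM₂₂det : IsUnit M₂₂.det := (Matrix.isUnit_iff_isUnit_det M₂₂).mp hM₂₂inv
  -- key computation: M *ᵥ Sum.elim 0 z = Sum.elim (M₁₂ *ᵥ z) (M₂₂ *ᵥ z)
  have key : ∀ z : Fin q → ℝ,
      M *ᵥ Sum.elim (0 : Fin p → ℝ) z = Sum.elim (M₁₂ *ᵥ z) (M₂₂ *ᵥ z) := by
    intro z
    rw [hM, Matrix.fromBlocks_mulVec]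
    simp
  ext v
  simp only [LinearMap.mem_ker, LinearMap.mem_range, Matrix.mulVecLin_apply]
  constructor
  · intro h
    set w := M⁻¹ *ᵥ v with hw
    have hv : v = M *ᵥ w := by
      rw [hw, Matrix.mulVec_mulVec, Matrix.mul_nonsing_inv M hMdet, Matrix.one_mulVec]
    have hGv : Matrix.fromCols (1 : Matrix (Fin p) (Fin p) ℝ) 0 *ᵥ w = 0 := by
      rw [hw, Matrix.mulVec_mulVec, ← hGT]; exact h
    have hwl : w ∘ Sum.inl = 0 := by
      have := hGv
      rw [show w = Sum.elim (w ∘ Sum.inl) (w ∘ Sum.inr) by ext (i|i) <;> rfl,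
        Matrix.fromCols_mulVec_sumElim] at this
      simpa using this
    have hwe : w = Sum.elim (0 : Fin p → ℝ) (w ∘ Sum.inr) := by
      ext (i|i)
      · exact congrFun hwl i
      · rfl
    refine ⟨M₂₂ *ᵥ (w ∘ Sum.inr), ?_⟩
    rw [hX, Matrix.fromRows_mulVec, hN, Matrix.mulVec_mulVec, Matrix.mul_assoc,
      Matrix.nonsing_inv_mul M₂₂ hM₂₂det, Matrix.mul_one, Matrix.one_mulVec]
    rw [hv, hwe, key]
    simp
  · rintro ⟨u, rfl⟩
    have hXu : X *ᵥ u = M *ᵥ Sum.elim (0 : Fin p → ℝ) (M₂₂⁻¹ *ᵥ u) := by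
      rw [key, hX, Matrix.fromRows_mulVec, hN]
      simp [Matrix.mulVec_mulVec, Matrix.mul_nonsing_inv M₂₂ hM₂₂det]
    rw [hGT, hXu, Matrix.mulVec_mulVec, Matrix.mul_assoc,
      Matrix.nonsing_inv_mul M hMdet, Matrix.mul_one,
      Matrix.fromCols_mulVec_sumElim]
    simp
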